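/- Let $X \in \mathbb{C}^{n\times p}$ with $X^*HX = K$ ($H \succeq 0$ symmetric, $K \succ 0$ symmetric), $D \in \mathbb{C}^{n\times p}$ with $X^*HD$ skew-Hermitian. Set $W = -(I_n - XK^{-1}X^*H)D$ and $J(\tau) = K + \frac{\tau^2}{4}W^*HW + \frac{\tau}{2}X^*HD$. Then $J(\tau)$ is invertible and $Y(\tau) = (2X + \tau W)J(\tau)^{-1}K - X$ satisfies $Y(\tau)^*HY(\tau) = K$. -/

import Mathlib

open Matrix
open scoped ComplexOrder

lemma smul_posSemidef' {m : ℕ} {c : ℝ} (hc : 0 ≤ c) {A : Matrix (Fin m) (Fin m) ℂ}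
    (hA : A.PosSemidef) : (c • A).PosSemidef := by
  refine Matrix.PosSemidef.of_dotProduct_mulVec_nonneg ?_ ?_
  · unfold Matrix.IsHermitian
    rw [conjTranspose_smul, hA.1]
    norm_num
  · intro x
    rw [Matrix.smul_mulVec, dotProduct_smul]
    exact smul_nonneg hc (hA.dotProduct_mulVec_nonneg x)

lemma herm_dot {m : ℕ} (J : Matrix (Fin m) (Fin m) ℂ) (v : Fin m → ℂ) :
    star v ⬝ᵥ Jᴴ *ᵥ v = star (star v ⬝ᵥ J *ᵥ v) := by
  rw [star_dotProduct, star_mulVec, conjTranspose_conjTranspose, ← dotProduct_mulVec]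

theorem stmt_15 (n p : ℕ) (X D : Matrix (Fin n) (Fin p) ℂ)
    (H : Matrix (Fin n) (Fin n) ℂ) (hH : H.PosSemidef) (hHre : ∀ i j, (H i j).im = 0)
    (K : Matrix (Fin p) (Fin p) ℂ) (hK : K.PosDef) (hKre : ∀ i j, (K i j).im = 0)
    (hXK : Xᴴ * H * X = K)
    (hskew : (Xᴴ * H * D)ᴴ = -(Xᴴ * H * D))
    (W : Matrix (Fin n) (Fin p) ℂ) (hW : W = -((1 - X * K⁻¹ * Xᴴ * H) * D))
    (τ : ℝ) (hτ : 0 ≤ τ)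
    (J : Matrix (Fin p) (Fin p) ℂ)
    (hJ : J = K + (τ ^ 2 / 4 : ℝ) • (Wᴴ * H * W) + (τ / 2 : ℝ) • (Xᴴ * H * D))
    (Y : Matrix (Fin n) (Fin p) ℂ)
    (hY : Y = ((2 : ℂ) • X + (τ : ℝ) • W) * J⁻¹ * K - X) :
    IsUnit J ∧ Yᴴ * H * Y = K := by
  have hKd : IsUnit K.det := (Matrix.isUnit_iff_isUnit_det K).mp hK.isUnit
  have hKK : K * K⁻¹ = 1 := Matrix.mul_nonsing_inv K hKd
  -- X^* H W = 0
  have hXHW : Xᴴ * H * W = 0 := by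
    rw [hW, Matrix.mul_neg]
    have e1 : Xᴴ * H * ((1 - X * K⁻¹ * Xᴴ * H) * D)
        = Xᴴ * H * D - (Xᴴ * H * X) * (K⁻¹ * (Xᴴ * (H * D))) := by
      simp only [Matrix.sub_mul, Matrix.one_mul, Matrix.mul_sub, Matrix.mul_assoc]
    rw [e1, hXK, ← Matrix.mul_assoc K K⁻¹, hKK, Matrix.one_mul, ← Matrix.mul_assoc,
      sub_self, neg_zero]
  have hWHX : Wᴴ * H * X = 0 := by
    have := congrArg conjTranspose hXHW
    simpa [conjTranspose_mul, Matrix.mul_assoc, hH.1.eq] using this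
  -- Hermitian facts
  have hKH : Kᴴ = K := hK.1.eq
  have hSH : (Wᴴ * H * W)ᴴ = Wᴴ * H * W := by
    simp [conjTranspose_mul, ← Matrix.mul_assoc, hH.1.eq]
  -- conjugate transpose of J
  have hJH : Jᴴ = K + (τ ^ 2 / 4 : ℝ) • (Wᴴ * H * W) - (τ / 2 : ℝ) • (Xᴴ * H * D) := by
    rw [hJ]
    simp only [conjTranspose_add, conjTranspose_smul, star_trivial, hKH, hSH, hskew,
      smul_neg]
    abel
  set S := Wᴴ * H * W with hS
  set P := K + (τ ^ 2 / 4 : ℝ) • S with hP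
  have hsum : J + Jᴴ = P + P := by rw [hJH, hJ]; abel
  have hPpd : P.PosDef :=
    hK.add_posSemidef (smul_posSemidef' (by positivity) (hH.conjTranspose_mul_mul_same W))
  have hPP : (P + P).PosDef := hPpd.add_posSemidef hPpd.posSemidef
  -- J is a unit
  have hJunit : IsUnit J := by
    rw [← Matrix.mulVec_injective_iff_isUnit]
    have key : ∀ v, J *ᵥ v = 0 → v = 0 := by
      intro v hv
      by_contra hv0
      have hpos := hPP.dotProduct_mulVec_pos hv0
      have : star v ⬝ᵥ (P + P) *ᵥ v = 0 := by
        rw [← hsum, Matrix.add_mulVec, dotProduct_add, herm_dot, hv]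
        simp
      rw [this] at hpos
      exact lt_irrefl _ hpos
    intro a b hab
    have := key (a - b) (by rw [Matrix.mulVec_sub, hab, sub_self])
    exact sub_eq_zero.mp this
  refine ⟨hJunit, ?_⟩
  -- invertibility identities
  have hJd : IsUnit J.det := (Matrix.isUnit_iff_isUnit_det J).mp hJunit
  have hJJ : J * J⁻¹ = 1 := Matrix.mul_nonsing_inv J hJd
  have hJJ' : J⁻¹ * J = 1 := Matrix.nonsing_inv_mul J hJd
  have hJH1 : J⁻¹ᴴ * Jᴴ = 1 := by rw [← conjTranspose_mul, hJJ, conjTranspose_one]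
  have hJH2 : Jᴴ * J⁻¹ᴴ = 1 := by rw [← conjTranspose_mul, hJJ', conjTranspose_one]
  -- real smul to complex smul
  have hτW : (τ : ℝ) • W = (τ : ℂ) • W := by
    ext i j; simp [Complex.real_smul]
  set M := (2 : ℂ) • X + (τ : ℂ) • W with hM
  have hY' : Y = M * J⁻¹ * K - X := by rw [hY, hτW]
  have hMH : Mᴴ = (2 : ℂ) • Xᴴ + (τ : ℂ) • Wᴴ := by
    simp [hM, conjTranspose_add, conjTranspose_smul, Complex.conj_ofReal]
  -- M^* H M = 2 (J + J^H)
  have hMHM : Mᴴ * H * M = (2 : ℂ) • (J + Jᴴ) := by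
    have hc1 : (τ ^ 2 / 4 : ℝ) • S = ((τ : ℂ) ^ 2 / 4) • S := by
      have hc : ((τ ^ 2 / 4 : ℝ) : ℂ) = (τ : ℂ) ^ 2 / 4 := by push_cast; ring
      ext i j
      simp [Matrix.smul_apply, Complex.real_smul, hc]
    rw [hsum, hMH, hM, hP, hc1]
    simp only [Matrix.add_mul, Matrix.mul_add, Matrix.smul_mul, Matrix.mul_smul,
      smul_smul, hXK, hXHW, hWHX, smul_zero, add_zero, zero_add]
    match_scalars <;> ring
  have hMHX : Mᴴ * H * X = (2 : ℂ) • K := by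
    rw [hMH]
    simp only [Matrix.add_mul, Matrix.smul_mul, hXK, hWHX, smul_zero, add_zero]
  have hXHM : Xᴴ * H * M = (2 : ℂ) • K := by
    rw [hM]
    simp only [Matrix.mul_add, Matrix.mul_smul, hXK, hXHW, smul_zero, add_zero]
  -- expand Y^* H Y
  have expand : Yᴴ * H * Y
      = K * (J⁻¹ᴴ * ((Mᴴ * H * M) * (J⁻¹ * K)))
        - K * (J⁻¹ᴴ * (Mᴴ * H * X))
        - (Xᴴ * H * M) * (J⁻¹ * K) + Xᴴ * H * X := by
    rw [hY']
    simp only [conjTranspose_sub, conjTranspose_mul, hKH, Matrix.sub_mul, Matrix.mul_sub,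
      Matrix.mul_assoc]
    abel
  rw [expand, hMHM, hMHX, hXHM, hXK]
  have k1 : J⁻¹ᴴ * J * J⁻¹ = J⁻¹ᴴ := by rw [Matrix.mul_assoc, hJJ, Matrix.mul_one]
  have k2 : J⁻¹ᴴ * Jᴴ * J⁻¹ = J⁻¹ := by rw [hJH1, Matrix.one_mul]
  have e2 : J⁻¹ᴴ * ((2 : ℂ) • (J + Jᴴ) * (J⁻¹ * K))
      = (2 : ℂ) • (J⁻¹ᴴ * K) + (2 : ℂ) • (J⁻¹ * K) := by
    simp only [Matrix.smul_mul, Matrix.mul_smul, Matrix.add_mul, Matrix.mul_add, smul_add,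
      ← Matrix.mul_assoc, k1, k2]
  rw [e2]
  simp only [Matrix.mul_add, Matrix.mul_smul, Matrix.smul_mul, ← Matrix.mul_assoc]
  abel
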